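/- arXiv:2501.16940 — 6 statements merged into one kernel-verified Lean document; each statement's English description precedes it below -/
import Mathlib

section
/- If K₁ and K₂ are convex bodies of constant width 1 in ℝⁿ with K₁ ⊆ K₂, then K₁ = K₂. -/
open Set Metric Pointwise

noncomputable def suppFn {n : ℕ} (K : Set (EuclideanSpace ℝ (Fin n)))
    (u : EuclideanSpace ℝ (Fin n)) : ℝ :=
  sSup ((fun x => (inner ℝ x u : ℝ)) '' K)

def IsCW1 {n : ℕ} (K : Set (EuclideanSpace ℝ (Fin n))) : Prop :=
  IsCompact K ∧ Convex ℝ K ∧ K.Nonempty ∧ ∀ u, suppFn K u + suppFn K (-u) = ‖u‖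

lemma suppFn_mono {n : ℕ} {K₁ K₂ : Set (EuclideanSpace ℝ (Fin n))}
    (hc : IsCompact K₂) (hne : K₁.Nonempty) (hsub : K₁ ⊆ K₂)
    (u : EuclideanSpace ℝ (Fin n)) : suppFn K₁ u ≤ suppFn K₂ u := by
  apply csSup_le_csSup
  · exact (hc.image (Continuous.inner (𝕜 := ℝ) continuous_id continuous_const)).bddAbove
  · exact hne.image _
  · exact image_mono hsub

theorem stmt_3 {n : ℕ} (K₁ K₂ : Set (EuclideanSpace ℝ (Fin n)))
    (h₁ : IsCW1 K₁) (h₂ : IsCW1 K₂) (hsub : K₁ ⊆ K₂) : K₁ = K₂ := by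
  obtain ⟨hc₁, hv₁, hn₁, hw₁⟩ := h₁
  obtain ⟨hc₂, hv₂, hn₂, hw₂⟩ := h₂
  have heq : ∀ u, suppFn K₁ u = suppFn K₂ u := by
    intro u
    have h1 := suppFn_mono hc₂ hn₁ hsub u
    have h2 := suppFn_mono hc₂ hn₁ hsub (-u)
    have := hw₁ u
    have := hw₂ u
    linarith
  apply Subset.antisymm hsub
  intro x hx
  by_contra hxK
  obtain ⟨f, c, hfa, hfx⟩ := geometric_hahn_banach_closed_point hv₁ hc₁.isClosed hxK
  set v := (InnerProductSpace.toDual ℝ (EuclideanSpace ℝ (Fin n))).symm f with hv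
  have hfv : ∀ y, f y = (inner ℝ y v : ℝ) := by
    intro y
    rw [real_inner_comm]
    simp [hv, InnerProductSpace.toDual_symm_apply]
  have h1 : suppFn K₁ v ≤ c := by
    apply csSup_le (hn₁.image _)
    rintro _ ⟨a, ha, rfl⟩
    show (inner ℝ a v : ℝ) ≤ c
    rw [← hfv]
    exact (hfa a ha).le
  have h2 : (inner ℝ x v : ℝ) ≤ suppFn K₂ v := by
    apply le_csSup
    · exact (hc₂.image (Continuous.inner (𝕜 := ℝ) continuous_id continuous_const)).bddAbove
    · exact mem_image_of_mem _ hx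
  rw [← heq v] at h2
  rw [hfv] at hfx
  linarith
end

section
/- Let X = {x₁,…,x_m} ⊂ ℝⁿ with diameter 1, and suppose K = (1−λ)K₀ + λK₁ is a decomposition of a constant-width body K containing X, with λ ∈ (0,1), and choose x_j⁰ ∈ K₀, x_j¹ ∈ K₁ with x_j = (1−λ)x_j⁰ + λx_j¹. If |x_i − x_j| = 1, then x_i − x_j = x_i⁰ − x_j⁰ = x_i¹ − x_j¹. -/
open Set Metric Pointwise

lemma cw1_norm_sub_le {n : ℕ} {K : Set (EuclideanSpace ℝ (Fin n))} (hK : IsCW1 K)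
    {a b : EuclideanSpace ℝ (Fin n)} (ha : a ∈ K) (hb : b ∈ K) : ‖a - b‖ ≤ 1 := by
  obtain ⟨hc, -, -, hw⟩ := hK
  set u := a - b with hu
  have hcont : ∀ v : EuclideanSpace ℝ (Fin n),
      Continuous fun x : EuclideanSpace ℝ (Fin n) => (inner ℝ x v : ℝ) :=
    fun v => continuous_id.inner continuous_const
  have h1 : (inner ℝ a u : ℝ) ≤ suppFn K u :=
    le_csSup ((hc.image (hcont u)).bddAbove) ⟨a, ha, rfl⟩
  have h2 : (inner ℝ b (-u) : ℝ) ≤ suppFn K (-u) :=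
    le_csSup ((hc.image (hcont (-u))).bddAbove) ⟨b, hb, rfl⟩
  have hsum := hw u
  have h3 : (inner ℝ a u : ℝ) - inner ℝ b u ≤ ‖u‖ := by
    rw [inner_neg_right] at h2; linarith
  have h4 : (inner ℝ u u : ℝ) ≤ ‖u‖ := by
    rw [hu, inner_sub_left]; rw [hu] at h3; linarith
  have h5 : ‖u‖ ^ 2 ≤ ‖u‖ := by
    rwa [real_inner_self_eq_norm_sq] at h4
  nlinarith [norm_nonneg u]

theorem stmt_5 {n m : ℕ} (x x0 x1 : Fin m → EuclideanSpace ℝ (Fin n))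
    (hdiam : Metric.diam (Set.range x) = 1)
    (K K₀ K₁ : Set (EuclideanSpace ℝ (Fin n)))
    (hK : IsCW1 K) (hK₀ : IsCW1 K₀) (hK₁ : IsCW1 K₁)
    (lam : ℝ) (hlam : lam ∈ Set.Ioo (0:ℝ) 1)
    (hdec : K = (1 - lam) • K₀ + lam • K₁)
    (hxK : ∀ j, x j ∈ K) (hx0 : ∀ j, x0 j ∈ K₀) (hx1 : ∀ j, x1 j ∈ K₁)
    (hcomb : ∀ j, x j = (1 - lam) • x0 j + lam • x1 j) :
    ∀ i j, dist (x i) (x j) = 1 →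
      x i - x j = x0 i - x0 j ∧ x i - x j = x1 i - x1 j := by
  intro i j hij
  obtain ⟨hl0, hl1⟩ := hlam
  set a := x0 i - x0 j with ha
  set b := x1 i - x1 j with hb
  set c := x i - x j with hc
  have hcab : c = (1 - lam) • a + lam • b := by
    rw [hc, ha, hb, hcomb i, hcomb j]
    module
  have hnc : ‖c‖ = 1 := by rw [hc, ← dist_eq_norm]; exact hij
  have hna : ‖a‖ ≤ 1 := cw1_norm_sub_le hK₀ (hx0 i) (hx0 j)
  have hnb : ‖b‖ ≤ 1 := cw1_norm_sub_le hK₁ (hx1 i) (hx1 j)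
  have hiac : (inner ℝ a c : ℝ) ≤ 1 := by
    calc (inner ℝ a c : ℝ) ≤ ‖a‖ * ‖c‖ := real_inner_le_norm a c
    _ ≤ 1 := by rw [hnc]; simpa using hna
  have hibc : (inner ℝ b c : ℝ) ≤ 1 := by
    calc (inner ℝ b c : ℝ) ≤ ‖b‖ * ‖c‖ := real_inner_le_norm b c
    _ ≤ 1 := by rw [hnc]; simpa using hnb
  have hicc : (inner ℝ c c : ℝ) = 1 := by
    rw [real_inner_self_eq_norm_sq, hnc]; norm_num
  have hsplit : (1 - lam) * (inner ℝ a c : ℝ) + lam * inner ℝ b c = 1 := by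
    have h : (inner ℝ c c : ℝ) = (1 - lam) * inner ℝ a c + lam * inner ℝ b c := by
      nth_rewrite 1 [hcab]
      rw [inner_add_left, real_inner_smul_left, real_inner_smul_left]
    linarith
  have hiac1 : (inner ℝ a c : ℝ) = 1 := by nlinarith
  have hibc1 : (inner ℝ b c : ℝ) = 1 := by nlinarith
  have key : ∀ v : EuclideanSpace ℝ (Fin n), ‖v‖ ≤ 1 → (inner ℝ v c : ℝ) = 1 → c = v := by
    intro v hv hvc
    have h1 : ‖v - c‖ ^ 2 = ‖v‖ ^ 2 - 2 * inner ℝ v c + ‖c‖ ^ 2 :=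
      norm_sub_sq_real v c
    have h2 : ‖v - c‖ ^ 2 ≤ 0 := by
      rw [h1, hvc, hnc]; nlinarith [norm_nonneg v]
    have h3 : ‖v - c‖ ^ 2 = 0 := le_antisymm h2 (sq_nonneg _)
    have h4 : v - c = 0 := norm_eq_zero.mp (sq_eq_zero_iff.mp h3)
    exact (sub_eq_zero.mp h4).symm
  exact ⟨key a hna hiac1, key b hnb hibc1⟩
end

section
/- Let c be the circle {y ∈ ℝ³ : y₃ = x₃, √(y₁² + y₂²) = |x₁|} for a point x = (x₁, x₃) with x₁² + x₃² ≤ 1. Then the intersection of all closed unit balls centered at points of c equals {y ∈ ℝ³ : (√(y₁² + y₂²) + |x₁|)² + (y₃ − x₃)² ≤ 1}. -/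
open Set Metric

theorem stmt_8 (x₁ x₃ : ℝ) (hx : x₁ ^ 2 + x₃ ^ 2 ≤ 1)
    (c : Set (EuclideanSpace ℝ (Fin 3)))
    (hc : c = {y : EuclideanSpace ℝ (Fin 3) |
      y 2 = x₃ ∧ Real.sqrt ((y 0) ^ 2 + (y 1) ^ 2) = |x₁|}) :
    (⋂ p ∈ c, Metric.closedBall p 1) =
      {y : EuclideanSpace ℝ (Fin 3) |
        (Real.sqrt ((y 0) ^ 2 + (y 1) ^ 2) + |x₁|) ^ 2 + (y 2 - x₃) ^ 2 ≤ 1} := by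
  subst hc
  have hdist : ∀ y p : EuclideanSpace ℝ (Fin 3),
      dist y p ≤ 1 ↔ (y 0 - p 0)^2 + (y 1 - p 1)^2 + (y 2 - p 2)^2 ≤ 1 := by
    intro y p
    rw [EuclideanSpace.dist_eq, show (1:ℝ) = Real.sqrt 1 from (Real.sqrt_one).symm,
      Real.sqrt_le_sqrt_iff (by positivity)]
    simp [Fin.sum_univ_three, Real.dist_eq, sq_abs]
  ext y
  simp only [mem_iInter, mem_setOf_eq, Metric.mem_closedBall]
  set s := Real.sqrt ((y 0)^2 + (y 1)^2) with hsdef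
  have hs0 : 0 ≤ s := Real.sqrt_nonneg _
  have hsq : s^2 = (y 0)^2 + (y 1)^2 := Real.sq_sqrt (by positivity)
  have hr0 : (0:ℝ) ≤ |x₁| := abs_nonneg _
  constructor
  · intro h
    by_cases hsz : s = 0
    · have hy : (y 0)^2 + (y 1)^2 = 0 := by rw [← hsq, hsz]; ring
      have hp := h ((WithLp.equiv 2 _).symm ![|x₁|, 0, x₃]) ?_
      · rw [hdist] at hp
        simp [WithLp.equiv_symm_apply, PiLp.toLp_apply] at hp
        rw [hsz]
        nlinarith [sq_nonneg (y 0), sq_nonneg (y 1), sq_nonneg (y 0 - |x₁|)]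
      · refine ⟨by simp [WithLp.equiv_symm_apply, PiLp.toLp_apply], ?_⟩
        simp [WithLp.equiv_symm_apply, PiLp.toLp_apply]
        exact Real.sqrt_sq_eq_abs _
    · have hp := h ((WithLp.equiv 2 _).symm ![-(|x₁| * y 0 / s), -(|x₁| * y 1 / s), x₃]) ?_
      · rw [hdist] at hp
        simp only [WithLp.equiv_symm_apply, PiLp.toLp_apply, Matrix.cons_val_zero, Matrix.cons_val_one,
          Matrix.head_cons, Matrix.cons_val_two, Matrix.tail_cons] at hp
        have key : (y 0 - -(|x₁| * y 0 / s))^2 + (y 1 - -(|x₁| * y 1 / s))^2 = (s + |x₁|)^2 := by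
          have e : (y 0 - -(|x₁| * y 0 / s))^2 + (y 1 - -(|x₁| * y 1 / s))^2
              = ((y 0)^2 + (y 1)^2) * ((1 + |x₁| / s))^2 := by ring
          rw [e, ← hsq]
          field_simp
        linarith [hp, key.symm.le]
      · refine ⟨by simp [WithLp.equiv_symm_apply, PiLp.toLp_apply], ?_⟩
        simp only [WithLp.equiv_symm_apply, PiLp.toLp_apply, Matrix.cons_val_zero, Matrix.cons_val_one,
          Matrix.head_cons]
        have e : (-(|x₁| * y 0 / s))^2 + (-(|x₁| * y 1 / s))^2 = |x₁|^2 * (((y 0)^2 + (y 1)^2) / s^2) := by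
          ring
        rw [e, ← hsq]
        rw [div_self (by positivity : s^2 ≠ 0), mul_one, Real.sqrt_sq hr0]
  · intro h p hp
    obtain ⟨hp2, hpr⟩ := hp
    have hpr2 : (p 0)^2 + (p 1)^2 = |x₁|^2 := by
      rw [← hpr]; rw [Real.sq_sqrt (by positivity)]
    rw [hdist, hp2]
    nlinarith [sq_nonneg (y 0 * p 1 - y 1 * p 0), mul_nonneg hs0 hr0,
      sq_nonneg (s * |x₁| + y 0 * p 0 + y 1 * p 1), sq_nonneg (y 0 * p 0 + y 1 * p 1)]
end

section
/- Let H be the support function of a convex body K of constant width 1 in ℝⁿ. Then for almost every u ≠ 0 where the Hessian exists, D²H(u) + D²H(−u) = (1/|u|)(I − u⊗u/|u|²). In particular the eigenvalues of D²H are bounded, so H is continuously differentiable away from the origin and DH is Lipschitz on {|u| ≥ r} for each r > 0. -/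
open Set Metric RealInnerProductSpace Asymptotics Filter

section Aux
variable {E : Type*} [NormedAddCommGroup E] [InnerProductSpace ℝ E]

theorem hasFDerivAt_norm_ips {u : E} (hu : u ≠ 0) :
    HasFDerivAt (fun w : E => ‖w‖) (‖u‖⁻¹ • innerSL ℝ u) u := by
  have hn : ‖u‖ ≠ 0 := norm_ne_zero_iff.mpr hu
  have h2 : (‖u‖ : ℝ)^2 ≠ 0 := pow_ne_zero _ hn
  have h := (Real.hasDerivAt_sqrt h2).comp_hasFDerivAt u
    (hasStrictFDerivAt_norm_sq u).hasFDerivAt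
  have heq : (fun w : E => Real.sqrt (‖w‖^2)) = fun w : E => ‖w‖ := by
    funext w; rw [Real.sqrt_sq (norm_nonneg w)]
  rw [show ((fun x => Real.sqrt x) ∘ fun x : E => ‖x‖ ^ 2) = fun w : E => ‖w‖ from heq] at h
  refine h.congr_fderiv ?_
  ext v
  rw [Real.sqrt_sq (norm_nonneg u)]
  simp [ContinuousLinearMap.smul_apply, two_smul]
  field_simp
  ring

noncomputable def innerRCLM : E →L[ℝ] E →L[ℝ] ℝ :=
  LinearMap.mkContinuous
    { toFun := fun w => innerSL ℝ w
      map_add' := fun a b => by ext v; simp [inner_add_left]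
      map_smul' := fun c a => by ext v; simp [real_inner_smul_left] } 1
    (fun w => by simp [innerSL_apply_norm])

@[simp] theorem innerRCLM_apply (w v : E) : (innerRCLM w) v = ⟪w, v⟫ := rfl

end Aux

set_option maxHeartbeats 1000000 in
theorem stmt_12 {n : ℕ} (K : Set (EuclideanSpace ℝ (Fin n))) (hK : IsCW1 K)
    (H : EuclideanSpace ℝ (Fin n) → ℝ) (hH : H = suppFn K) :
    (∀ u : EuclideanSpace ℝ (Fin n), u ≠ 0 →
      DifferentiableAt ℝ (fderiv ℝ H) u → DifferentiableAt ℝ (fderiv ℝ H) (-u) →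
      ∀ v w : EuclideanSpace ℝ (Fin n),
        fderiv ℝ (fderiv ℝ H) u v w + fderiv ℝ (fderiv ℝ H) (-u) v w =
          ‖u‖⁻¹ * (⟪v, w⟫ - ⟪u, v⟫ * ⟪u, w⟫ / ‖u‖ ^ 2)) ∧
    ContinuousOn (fderiv ℝ H) {u | u ≠ 0} ∧
    (∀ r : ℝ, 0 < r → ∃ L : NNReal, LipschitzOnWith L (fderiv ℝ H) {u | r ≤ ‖u‖}) := by
  subst hH
  obtain ⟨hKc, hKconv, hKne, hw⟩ := hK
  -- maximizer choice
  have hmax : ∀ u : EuclideanSpace ℝ (Fin n), ∃ p, p ∈ K ∧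
      IsGreatest ((fun x => (⟪x, u⟫ : ℝ)) '' K) ⟪p, u⟫ := by
    intro u
    have hcont : Continuous fun y : EuclideanSpace ℝ (Fin n) => (⟪y, u⟫ : ℝ) :=
      continuous_id.inner continuous_const
    obtain ⟨p, hpK, hp⟩ := hKc.exists_isMaxOn hKne hcont.continuousOn
    exact ⟨p, hpK, ⟨mem_image_of_mem _ hpK, by rintro _ ⟨y, hy, rfl⟩; exact hp hy⟩⟩
  choose x hxK hxg using hmax
  have hHx : ∀ u : EuclideanSpace ℝ (Fin n), suppFn K u = ⟪x u, u⟫ := fun u => (hxg u).csSup_eq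
  have hle : ∀ u : EuclideanSpace ℝ (Fin n), ∀ y ∈ K, (⟪y, u⟫ : ℝ) ≤ ⟪x u, u⟫ :=
    fun u y hy => (hxg u).2 (mem_image_of_mem _ hy)
  have hgeH : ∀ (u : EuclideanSpace ℝ (Fin n)), ∀ y ∈ K, (⟪y, u⟫ : ℝ) ≤ suppFn K u := by
    intro u y hy; rw [hHx u]; exact hle u y hy
  -- diameter at most 1
  have hdiam : ∀ y ∈ K, ∀ z ∈ K, ‖y - z‖ ≤ 1 := by
    intro y hy z hz
    rcases eq_or_ne y z with rfl | hyz
    · simp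
    have hnz : ‖y - z‖ ≠ 0 := norm_ne_zero_iff.mpr (sub_ne_zero.mpr hyz)
    set e : EuclideanSpace ℝ (Fin n) := ‖y - z‖⁻¹ • (y - z) with he_def
    have he : ‖e‖ = 1 := by
      rw [he_def, norm_smul, norm_inv, norm_norm, inv_mul_cancel₀ hnz]
    have h1 : (⟪y, e⟫ : ℝ) ≤ suppFn K e := hgeH e y hy
    have h2 : (⟪z, -e⟫ : ℝ) ≤ suppFn K (-e) := hgeH (-e) z hz
    have hsum := hw e
    rw [he] at hsum
    have hcalc : (⟪y, e⟫ : ℝ) + ⟪z, -e⟫ = ‖y - z‖ := by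
      rw [inner_neg_right, he_def]
      rw [real_inner_smul_right, real_inner_smul_right, ← sub_eq_add_neg, ← mul_sub,
        ← inner_sub_left, real_inner_self_eq_norm_mul_norm]
      field_simp
    linarith
  -- the opposite point relation
  have hopp : ∀ (u : EuclideanSpace ℝ (Fin n)), u ≠ 0 → ∀ p ∈ K, (∀ y ∈ K, (⟪y, u⟫ : ℝ) ≤ ⟪p, u⟫) →
      p - x (-u) = ‖u‖⁻¹ • u := by
    intro u hu p hpK hpmax
    have hn : (0:ℝ) < ‖u‖ := norm_pos_iff.mpr hu
    have hpu : (⟪p, u⟫ : ℝ) = suppFn K u :=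
      le_antisymm (by rw [hHx]; exact hle u p hpK) (by rw [hHx]; exact hpmax (x u) (hxK u))
    set d : EuclideanSpace ℝ (Fin n) := p - x (-u) with hd_def
    have hinn : (⟪d, u⟫ : ℝ) = ‖u‖ := by
      have : (⟪x (-u), u⟫ : ℝ) = -suppFn K (-u) := by
        rw [hHx (-u), inner_neg_right, neg_neg]
      rw [hd_def, inner_sub_left, hpu, this]
      have := hw u; linarith
    have hd1 : ‖d‖ ≤ 1 := hdiam p hpK (x (-u)) (hxK (-u))
    have hcs : (⟪d, u⟫ : ℝ) ≤ ‖d‖ * ‖u‖ := real_inner_le_norm d u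
    have hdn : ‖d‖ = 1 := by
      have h1 : (1:ℝ) ≤ ‖d‖ := by
        by_contra hlt
        push_neg at hlt
        nlinarith
      linarith
    have heq : (⟪d, u⟫ : ℝ) = ‖d‖ * ‖u‖ := by rw [hdn, hinn, one_mul]
    have h5 := inner_eq_norm_mul_iff_real.mp heq
    rw [hdn, one_smul] at h5
    calc d = ‖u‖⁻¹ • (‖u‖ • d) := (inv_smul_smul₀ (ne_of_gt hn) d).symm
      _ = ‖u‖⁻¹ • u := by rw [h5]
  have hoppx : ∀ (u : EuclideanSpace ℝ (Fin n)), u ≠ 0 → x u - x (-u) = ‖u‖⁻¹ • u :=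
    fun u hu => hopp u hu (x u) (hxK u) (hle u)
  -- differentiability of the support function
  have hderiv : ∀ (u : EuclideanSpace ℝ (Fin n)), u ≠ 0 → ∀ p ∈ K, (∀ y ∈ K, (⟪y, u⟫ : ℝ) ≤ ⟪p, u⟫) →
      HasFDerivAt (suppFn K) (innerSL ℝ p) u := by
    intro u hu p hpK hpmax
    have hoppp := hopp u hu p hpK hpmax
    rw [hasFDerivAt_iff_isLittleO_nhds_zero]
    have hnorm := hasFDerivAt_norm_ips hu
    rw [hasFDerivAt_iff_isLittleO_nhds_zero] at hnorm
    have hpu : (⟪p, u⟫ : ℝ) = suppFn K u :=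
      le_antisymm (by rw [hHx]; exact hle u p hpK) (by rw [hHx]; exact hpmax (x u) (hxK u))
    have hbound : ∀ h : EuclideanSpace ℝ (Fin n),
        ‖suppFn K (u + h) - suppFn K u - (innerSL ℝ p) h‖ ≤
        ‖‖u + h‖ - ‖u‖ - (‖u‖⁻¹ • innerSL ℝ u) h‖ := by
      intro h
      have hlow : (0:ℝ) ≤ suppFn K (u + h) - suppFn K u - ⟪p, h⟫ := by
        have := hgeH (u + h) p hpK
        rw [inner_add_right] at this
        linarith [hpu]
      have hup : suppFn K (u + h) - suppFn K u - (⟪p, h⟫:ℝ) ≤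
          ‖u + h‖ - ‖u‖ - ‖u‖⁻¹ * ⟪u, h⟫ := by
        have h1 : (⟪x (-u), -(u + h)⟫ : ℝ) ≤ suppFn K (-(u + h)) := hgeH _ _ (hxK (-u))
        have h2 := hw (u + h)
        have h3 := hw u
        have hx1 : (⟪x (-u), u⟫ : ℝ) = -suppFn K (-u) := by
          rw [hHx (-u), inner_neg_right, neg_neg]
        have hx2 : (⟪x (-u), -(u + h)⟫ : ℝ) = -⟪x (-u), u⟫ - ⟪x (-u), h⟫ := by
          rw [inner_neg_right, inner_add_right]; ring
        have hph : (⟪p, h⟫ : ℝ) = ⟪x (-u), h⟫ + ‖u‖⁻¹ * ⟪u, h⟫ := by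
          have : (⟪p - x (-u), h⟫ : ℝ) = ⟪(‖u‖⁻¹ : ℝ) • u, h⟫ := by rw [hoppp]
          rw [inner_sub_left, real_inner_smul_left] at this
          linarith
        rw [hph]
        have hHu : suppFn K u = ‖u‖ + ⟪x (-u), u⟫ := by rw [hx1]; linarith
        have hHuh : suppFn K (u + h) ≤ ‖u + h‖ + ⟪x (-u), u⟫ + ⟪x (-u), h⟫ := by
          have : suppFn K (u + h) = ‖u + h‖ - suppFn K (-(u + h)) := by linarith
          rw [this]
          have := h1
          rw [hx2] at this
          linarith
        linarith
      have happ : ((innerSL ℝ p) h : ℝ) = ⟪p, h⟫ := rfl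
      have happ2 : ((‖u‖⁻¹ • innerSL ℝ u) h : ℝ) = ‖u‖⁻¹ * ⟪u, h⟫ := by
        simp [ContinuousLinearMap.smul_apply]
      rw [happ, happ2, Real.norm_eq_abs, Real.norm_eq_abs]
      rw [abs_of_nonneg hlow]
      exact le_trans hup (le_abs_self _)
    exact (Asymptotics.isBigO_of_le _ hbound).trans_isLittleO hnorm
  have hfd : ∀ (u : EuclideanSpace ℝ (Fin n)), u ≠ 0 → fderiv ℝ (suppFn K) u = innerSL ℝ (x u) :=
    fun u hu => (hderiv u hu (x u) (hxK u) (hle u)).fderiv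
  -- innerSL injectivity on values
  have hinj : ∀ a b : EuclideanSpace ℝ (Fin n), innerSL ℝ a = innerSL ℝ b → a = b := by
    intro a b hab
    have := congrArg (fun T : EuclideanSpace ℝ (Fin n) →L[ℝ] ℝ => T (a - b)) hab
    simp only [innerSL_apply_apply] at this
    have : (⟪a - b, a - b⟫ : ℝ) = 0 := by rw [inner_sub_left]; linarith
    exact sub_eq_zero.mp (inner_self_eq_zero.mp this)
  -- x depends only on direction
  have hxdir : ∀ (u : EuclideanSpace ℝ (Fin n)), u ≠ 0 → ∀ c : ℝ, 0 < c → x (c • u) = x u := by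
    intro u hu c hc
    have hmaxp : ∀ y ∈ K, (⟪y, u⟫ : ℝ) ≤ ⟪x (c • u), u⟫ := by
      intro y hy
      have := hle (c • u) y hy
      rw [real_inner_smul_right, real_inner_smul_right] at this
      exact le_of_mul_le_mul_left (by linarith) hc
    have h1 := hderiv u hu (x (c • u)) (hxK (c • u)) hmaxp
    have h2 := hderiv u hu (x u) (hxK u) (hle u)
    exact hinj _ _ (h1.unique h2)
  -- Lipschitz on the sphere
  have hsphere : ∀ u v : EuclideanSpace ℝ (Fin n), ‖u‖ = 1 → ‖v‖ = 1 → ‖x u - x v‖ ≤ ‖u - v‖ := by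
    intro u v hu1 hv1
    have hu : u ≠ 0 := by intro h; rw [h] at hu1; simp at hu1
    have hv : v ≠ 0 := by intro h; rw [h] at hv1; simp at hv1
    set d : EuclideanSpace ℝ (Fin n) := x u - x v with hd_def
    have hxu : x (-u) = x u - u := by
      have h := hoppx u hu; rw [hu1, inv_one, one_smul] at h
      have h' : x u = u + x (-u) := sub_eq_iff_eq_add.mp h
      rw [h']; abel
    have hxv : x (-v) = x v - v := by
      have h := hoppx v hv; rw [hv1, inv_one, one_smul] at h
      have h' : x v = v + x (-v) := sub_eq_iff_eq_add.mp h
      rw [h']; abel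
    have h1 : ‖u - d‖ ≤ 1 := by
      have : u - d = x v - x (-u) := by rw [hxu, hd_def]; abel
      rw [this]; exact hdiam _ (hxK v) _ (hxK (-u))
    have h2 : ‖v + d‖ ≤ 1 := by
      have : v + d = x u - x (-v) := by rw [hxv, hd_def]; abel
      rw [this]; exact hdiam _ (hxK u) _ (hxK (-v))
    have e1 : ‖u - d‖^2 = ‖u‖^2 - 2 * ⟪u, d⟫ + ‖d‖^2 := norm_sub_sq_real u d
    have e2 : ‖v + d‖^2 = ‖v‖^2 + 2 * ⟪v, d⟫ + ‖d‖^2 := norm_add_sq_real v d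
    have q1 : ‖u - d‖^2 ≤ 1 := by nlinarith [norm_nonneg (u - d)]
    have q2 : ‖v + d‖^2 ≤ 1 := by nlinarith [norm_nonneg (v + d)]
    have key : ‖d‖^2 ≤ ⟪u - v, d⟫ := by
      rw [inner_sub_left]
      nlinarith [hu1, hv1]
    have hcs : (⟪u - v, d⟫ : ℝ) ≤ ‖u - v‖ * ‖d‖ := real_inner_le_norm _ _
    rcases eq_or_lt_of_le (norm_nonneg d) with h0 | hpos
    · rw [← h0]; exact norm_nonneg _
    · nlinarith
  -- Lipschitz away from origin
  have hxlip : ∀ r : ℝ, 0 < r → ∀ u v : EuclideanSpace ℝ (Fin n), r ≤ ‖u‖ → r ≤ ‖v‖ →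
      ‖x u - x v‖ ≤ 2 / r * ‖u - v‖ := by
    intro r hr u v hru hrv
    have hu : u ≠ 0 := by intro h; rw [h, norm_zero] at hru; linarith
    have hv : v ≠ 0 := by intro h; rw [h, norm_zero] at hrv; linarith
    have hun : (0:ℝ) < ‖u‖ := lt_of_lt_of_le hr hru
    have hvn : (0:ℝ) < ‖v‖ := lt_of_lt_of_le hr hrv
    set uh : EuclideanSpace ℝ (Fin n) := ‖u‖⁻¹ • u with huh_def
    set vh : EuclideanSpace ℝ (Fin n) := ‖v‖⁻¹ • v with hvh_def
    have huh1 : ‖uh‖ = 1 := by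
      rw [huh_def, norm_smul, norm_inv, norm_norm, inv_mul_cancel₀ (ne_of_gt hun)]
    have hvh1 : ‖vh‖ = 1 := by
      rw [hvh_def, norm_smul, norm_inv, norm_norm, inv_mul_cancel₀ (ne_of_gt hvn)]
    have hxu : x u = x uh := by
      have huh0 : uh ≠ 0 := by intro h; rw [h] at huh1; simp at huh1
      have := hxdir uh huh0 ‖u‖ hun
      rw [huh_def, smul_smul, mul_inv_cancel₀ (ne_of_gt hun), one_smul] at this
      exact this
    have hxv : x v = x vh := by
      have hvh0 : vh ≠ 0 := by intro h; rw [h] at hvh1; simp at hvh1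
      have := hxdir vh hvh0 ‖v‖ hvn
      rw [hvh_def, smul_smul, mul_inv_cancel₀ (ne_of_gt hvn), one_smul] at this
      exact this
    rw [hxu, hxv]
    refine le_trans (hsphere uh vh huh1 hvh1) ?_
    -- ‖uh - vh‖ ≤ 2/r * ‖u - v‖
    have hsplit : uh - vh = ‖u‖⁻¹ • (u - v) + (‖u‖⁻¹ - ‖v‖⁻¹) • v := by
      rw [huh_def, hvh_def, smul_sub, sub_smul]; abel
    have hbd : ‖uh - vh‖ ≤ ‖u‖⁻¹ * ‖u - v‖ + |‖u‖⁻¹ - ‖v‖⁻¹| * ‖v‖ := by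
      rw [hsplit]
      refine le_trans (norm_add_le _ _) ?_
      rw [norm_smul, norm_smul, norm_inv, norm_norm, Real.norm_eq_abs]
    have habs : |‖u‖⁻¹ - ‖v‖⁻¹| * ‖v‖ ≤ ‖u‖⁻¹ * ‖u - v‖ := by
      have h1 : |‖v‖ - ‖u‖| ≤ ‖u - v‖ := by
        rw [abs_sub_comm]; exact abs_norm_sub_norm_le u v
      have hinv : ‖u‖⁻¹ - ‖v‖⁻¹ = (‖v‖ - ‖u‖) / (‖u‖ * ‖v‖) := by
        field_simp
      rw [hinv, abs_div, abs_of_pos (mul_pos hun hvn), div_mul_eq_mul_div,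
        div_le_iff₀ (mul_pos hun hvn)]
      have h2 : ‖u‖⁻¹ * ‖u - v‖ * (‖u‖ * ‖v‖) = ‖u - v‖ * ‖v‖ := by
        field_simp
      rw [h2]
      exact mul_le_mul_of_nonneg_right h1 (norm_nonneg v)
    have hfin : ‖u‖⁻¹ * ‖u - v‖ + ‖u‖⁻¹ * ‖u - v‖ ≤ 2 / r * ‖u - v‖ := by
      have : ‖u‖⁻¹ ≤ r⁻¹ := inv_anti₀ hr hru
      have hnn : (0:ℝ) ≤ ‖u - v‖ := norm_nonneg _
      have : ‖u‖⁻¹ * ‖u - v‖ ≤ r⁻¹ * ‖u - v‖ := mul_le_mul_of_nonneg_right this hnn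
      rw [div_eq_mul_inv]
      linarith
    linarith
  -- Lipschitz property of the derivative
  have hLip : ∀ r : ℝ, 0 < r → LipschitzOnWith (Real.toNNReal (2 / r))
      (fderiv ℝ (suppFn K)) {u : EuclideanSpace ℝ (Fin n) | r ≤ ‖u‖} := by
    intro r hr
    rw [lipschitzOnWith_iff_dist_le_mul]
    intro a ha b hb
    simp only [mem_setOf_eq] at ha hb
    have hA : a ≠ 0 := by intro h; rw [h, norm_zero] at ha; linarith
    have hB : b ≠ 0 := by intro h; rw [h, norm_zero] at hb; linarith
    rw [hfd a hA, hfd b hB, dist_eq_norm, dist_eq_norm]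
    have hsub : (innerSL ℝ) (x a) - (innerSL ℝ) (x b) = (innerSL ℝ) (x a - x b) :=
      (map_sub (innerSL ℝ) _ _).symm
    rw [hsub, innerSL_apply_norm]
    have h2r : ((Real.toNNReal (2 / r) : NNReal) : ℝ) = 2 / r :=
      Real.coe_toNNReal _ (by positivity)
    rw [h2r]
    exact hxlip r hr a b ha hb
  refine ⟨?_, ?_, fun r hr => ⟨Real.toNNReal (2 / r), hLip r hr⟩⟩
  · -- second derivative identity
    intro u hu hd hd' v w
    have hun : ‖u‖ ≠ 0 := norm_ne_zero_iff.mpr hu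
    set F := fderiv ℝ (suppFn K) with hF
    have hinv : HasFDerivAt (fun w : EuclideanSpace ℝ (Fin n) => ‖w‖⁻¹)
        ((-(‖u‖ ^ 2)⁻¹ : ℝ) • (‖u‖⁻¹ • innerSL ℝ u)) u :=
      (hasDerivAt_inv hun).comp_hasFDerivAt u (hasFDerivAt_norm_ips hu)
    have hsm : HasFDerivAt
        (fun w : EuclideanSpace ℝ (Fin n) => ‖w‖⁻¹ • (innerRCLM w))
        (‖u‖⁻¹ • innerRCLM +
          ((-(‖u‖ ^ 2)⁻¹ : ℝ) • (‖u‖⁻¹ • innerSL ℝ u)).smulRight (innerRCLM u)) u :=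
      hinv.smul innerRCLM.hasFDerivAt
    have hΦ : HasFDerivAt (fun w => F w - F (-w))
        (‖u‖⁻¹ • innerRCLM +
          ((-(‖u‖ ^ 2)⁻¹ : ℝ) • (‖u‖⁻¹ • innerSL ℝ u)).smulRight (innerRCLM u)) u := by
      apply hsm.congr_of_eventuallyEq
      filter_upwards [eventually_ne_nhds hu] with a ha
      rw [hfd a ha, hfd (-a) (neg_ne_zero.mpr ha)]
      ext z
      simp only [ContinuousLinearMap.sub_apply, innerSL_apply_apply,
        ContinuousLinearMap.smul_apply, innerRCLM_apply, smul_eq_mul]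
      have h1 := hoppx a ha
      have h2 : (⟪x a - x (-a), z⟫ : ℝ) = ⟪(‖a‖⁻¹ : ℝ) • a, z⟫ := by rw [h1]
      rw [inner_sub_left, real_inner_smul_left] at h2
      linarith
    have hΦ2 : HasFDerivAt (fun w => F w - F (-w))
        (fderiv ℝ F u - (fderiv ℝ F (-u)).comp
          (-(ContinuousLinearMap.id ℝ (EuclideanSpace ℝ (Fin n))))) u := by
      have h1 : HasFDerivAt F (fderiv ℝ F u) u := hd.hasFDerivAt
      have hneg : HasFDerivAt (fun w : EuclideanSpace ℝ (Fin n) => -w)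
          (-(ContinuousLinearMap.id ℝ (EuclideanSpace ℝ (Fin n)))) u := (hasFDerivAt_id u).neg
      have h2 : HasFDerivAt (fun w => F (-w))
          ((fderiv ℝ F (-u)).comp
            (-(ContinuousLinearMap.id ℝ (EuclideanSpace ℝ (Fin n))))) u :=
        (hd'.hasFDerivAt).comp u hneg
      exact h1.sub h2
    have heq := hΦ2.unique hΦ
    have happ := congrArg (fun T => T v w) heq
    simp only [ContinuousLinearMap.sub_apply, ContinuousLinearMap.add_apply,
      ContinuousLinearMap.comp_apply, ContinuousLinearMap.neg_apply,
      ContinuousLinearMap.coe_id', id_eq, ContinuousLinearMap.smul_apply,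
      ContinuousLinearMap.smulRight_apply, innerRCLM_apply, innerSL_apply_apply,
      map_neg, smul_eq_mul] at happ
    have hexp : fderiv ℝ F u v w + fderiv ℝ F (-u) v w =
        ‖u‖⁻¹ * ⟪v, w⟫ + -(‖u‖ ^ 2)⁻¹ * (‖u‖⁻¹ * ⟪u, v⟫) * ⟪u, w⟫ := by
      linarith [happ]
    rw [hexp]
    field_simp
    ring
  · -- continuity of the derivative away from the origin
    intro u hu
    simp only [mem_setOf_eq] at hu
    have hn : (0:ℝ) < ‖u‖ := norm_pos_iff.mpr hu
    have hr : (0:ℝ) < ‖u‖ / 2 := by linarith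
    have hmem : {w : EuclideanSpace ℝ (Fin n) | ‖u‖ / 2 ≤ ‖w‖} ∈ nhds u := by
      have hopen : IsOpen {w : EuclideanSpace ℝ (Fin n) | ‖u‖ / 2 < ‖w‖} :=
        isOpen_lt continuous_const continuous_norm
      refine Filter.mem_of_superset (hopen.mem_nhds ?_) (fun w hw => le_of_lt (show ‖u‖ / 2 < ‖w‖ from hw))
      simp only [mem_setOf_eq]; linarith
    exact (((hLip _ hr).continuousOn).continuousAt hmem).continuousWithinAt
end

section
/- For 0 < a < 1, the support function of the convex body bounded by the inner spindle torus surface T_a = {x : (√(x₁²+x₂²) + √(1−a²))² + x₃² = 1} is given by: H(u) = a·u₃ if u₃/|u| ≥ a; H(u) = |u| − √(1−a²)·√(u₁²+u₂²) if −a ≤ u₃/|u| ≤ a; H(u) = −a·u₃ if u₃/|u| ≤ −a. -/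
open Set Metric

noncomputable def pt3 (c d e : ℝ) : EuclideanSpace ℝ (Fin 3) :=
  (WithLp.equiv 2 (Fin 3 → ℝ)).symm ![c, d, e]

lemma pt3_0 (c d e : ℝ) : pt3 c d e 0 = c := by simp [pt3]
lemma pt3_1 (c d e : ℝ) : pt3 c d e 1 = d := by simp [pt3]
lemma pt3_2 (c d e : ℝ) : pt3 c d e 2 = e := by simp [pt3]

set_option maxHeartbeats 2000000 in
theorem stmt_16 (a : ℝ) (ha : 0 < a) (ha1 : a < 1)
    (Ka : Set (EuclideanSpace ℝ (Fin 3)))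
    (hKa : Ka = {x : EuclideanSpace ℝ (Fin 3) |
      (Real.sqrt ((x 0) ^ 2 + (x 1) ^ 2) + Real.sqrt (1 - a ^ 2)) ^ 2 + (x 2) ^ 2 ≤ 1}) :
    ∀ u : EuclideanSpace ℝ (Fin 3), u ≠ 0 →
      ((a * ‖u‖ ≤ u 2 → suppFn Ka u = a * u 2) ∧
       (-(a * ‖u‖) ≤ u 2 → u 2 ≤ a * ‖u‖ →
          suppFn Ka u = ‖u‖ - Real.sqrt (1 - a ^ 2) * Real.sqrt ((u 0) ^ 2 + (u 1) ^ 2)) ∧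
       (u 2 ≤ -(a * ‖u‖) → suppFn Ka u = -(a * u 2))) := by
  have hb0 : (0:ℝ) < Real.sqrt (1 - a ^ 2) := Real.sqrt_pos.mpr (by nlinarith)
  set b := Real.sqrt (1 - a ^ 2) with hbdef
  have hb2 : b ^ 2 = 1 - a ^ 2 := Real.sq_sqrt (by nlinarith)
  intro u hu
  set s := Real.sqrt ((u 0) ^ 2 + (u 1) ^ 2) with hsdef
  have hs0 : 0 ≤ s := Real.sqrt_nonneg _
  have hs2 : s ^ 2 = (u 0) ^ 2 + (u 1) ^ 2 := Real.sq_sqrt (by positivity)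
  have hn0 : 0 < ‖u‖ := norm_pos_iff.mpr hu
  have hnval : ‖u‖ = Real.sqrt ((u 0) ^ 2 + (u 1) ^ 2 + (u 2) ^ 2) := by
    rw [EuclideanSpace.norm_eq]
    simp [Fin.sum_univ_three]
  have hn2 : ‖u‖ ^ 2 = s ^ 2 + (u 2) ^ 2 := by
    rw [hnval, Real.sq_sqrt (by positivity), hs2]
  have hinner : ∀ x : EuclideanSpace ℝ (Fin 3),
      (inner ℝ x u : ℝ) = x 0 * u 0 + x 1 * u 1 + x 2 * u 2 := by
    intro x
    simp [PiLp.inner_apply, Fin.sum_univ_three, RCLike.inner_apply, mul_comm]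
  -- generic reduction of the upper bound to a 2-variable inequality
  have hub : ∀ V : ℝ, (∀ r z : ℝ, 0 ≤ r → (r + b) ^ 2 + z ^ 2 ≤ 1 →
        r * s + z * (u 2) ≤ V) →
      ∀ x ∈ Ka, (inner ℝ x u : ℝ) ≤ V := by
    intro V hV x hx
    rw [hKa] at hx
    simp only [Set.mem_setOf_eq] at hx
    set r := Real.sqrt ((x 0) ^ 2 + (x 1) ^ 2) with hrdef
    have hr0 : 0 ≤ r := Real.sqrt_nonneg _
    have hr2 : r ^ 2 = (x 0) ^ 2 + (x 1) ^ 2 := Real.sq_sqrt (by positivity)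
    have hcs : x 0 * u 0 + x 1 * u 1 ≤ r * s := by
      nlinarith [sq_nonneg (x 0 * u 1 - x 1 * u 0), mul_nonneg hr0 hs0,
        sq_nonneg (x 0 * u 0 + x 1 * u 1 + r * s)]
    have := hV r (x 2) hr0 hx
    rw [hinner x]
    linarith
  -- generic conclusion
  have hconc : ∀ (V : ℝ) (x : EuclideanSpace ℝ (Fin 3)), x ∈ Ka →
      (inner ℝ x u : ℝ) = V → (∀ y ∈ Ka, (inner ℝ y u : ℝ) ≤ V) → suppFn Ka u = V := by
    intro V x hx hxV hB
    refine IsGreatest.csSup_eq ⟨⟨x, hx, hxV⟩, ?_⟩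
    rintro w ⟨y, hy, rfl⟩
    exact hB y hy
  refine ⟨?_, ?_, ?_⟩
  · -- case 1 : a‖u‖ ≤ u 2
    intro ha2
    have ht0 : 0 ≤ u 2 := le_trans (by positivity) ha2
    have ht2 : a ^ 2 * ‖u‖ ^ 2 ≤ (u 2) ^ 2 := by
      nlinarith [pow_le_pow_left₀ (by positivity : (0:ℝ) ≤ a * ‖u‖) ha2 2]
    have htb : a * s ≤ (u 2) * b := by
      nlinarith [mul_nonneg hs0 ha.le, mul_nonneg ht0 hb0.le,
        sq_nonneg (a * s - u 2 * b), sq_nonneg (a * s + u 2 * b)]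
    refine hconc _ (pt3 0 0 a) ?_ ?_ ?_
    · rw [hKa]
      simp only [Set.mem_setOf_eq, pt3_0, pt3_1, pt3_2]
      rw [show (0:ℝ) ^ 2 + 0 ^ 2 = 0 by ring, Real.sqrt_zero]
      nlinarith
    · rw [hinner]
      simp [pt3_0, pt3_1, pt3_2]
    · apply hub
      intro r z hr0 hcon
      have hz : z ≤ a := by
        nlinarith [mul_nonneg hr0 hb0.le, sq_nonneg r]
      have hb2' : b ^ 2 * (1 - z ^ 2) = (1 - a ^ 2) * (1 - z ^ 2) := by rw [hb2]
      have h2 : (b * (r + b)) ^ 2 ≤ (1 - a * z) ^ 2 := by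
        nlinarith [sq_nonneg (a - z), hb2',
          mul_nonneg (sq_nonneg b) (by linarith : (0:ℝ) ≤ 1 - ((r + b) ^ 2 + z ^ 2))]
      have haz : a * z < 1 := by nlinarith
      have hkey : b * (r + b) ≤ 1 - a * z := by
        nlinarith [h2, mul_nonneg hb0.le (by linarith : (0:ℝ) ≤ r + b)]
      have e1 : r * b ≤ a * (a - z) := by nlinarith [hkey, hb2]
      have e2 : s * (r * b) ≤ s * (a * (a - z)) := mul_le_mul_of_nonneg_left e1 hs0
      have e3 : (a - z) * (a * s) ≤ (a - z) * ((u 2) * b) :=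
        mul_le_mul_of_nonneg_left htb (by linarith)
      have final : b * (r * s + z * (u 2)) ≤ b * (a * (u 2)) := by nlinarith [e2, e3]
      exact le_of_mul_le_mul_left final hb0
  · -- case 2
    intro hm1 hm2
    have ht2 : (u 2) ^ 2 ≤ a ^ 2 * ‖u‖ ^ 2 := by nlinarith
    have hsb : b * ‖u‖ ≤ s := by
      nlinarith [mul_nonneg hb0.le hn0.le, sq_nonneg (s - b * ‖u‖), sq_nonneg (s + b * ‖u‖)]
    have hspos : 0 < s := lt_of_lt_of_le (by positivity) hsb
    refine hconc _ (pt3 ((s - b * ‖u‖) / (s * ‖u‖) * u 0) ((s - b * ‖u‖) / (s * ‖u‖) * u 1) (u 2 / ‖u‖)) ?_ ?_ ?_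
    · rw [hKa]
      simp only [Set.mem_setOf_eq, pt3_0, pt3_1, pt3_2]
      set c := (s - b * ‖u‖) / (s * ‖u‖) with hcdef
      have hc0 : 0 ≤ c := div_nonneg (by linarith) (by positivity)
      have hcs : Real.sqrt ((c * u 0) ^ 2 + (c * u 1) ^ 2) = c * s := by
        rw [show (c * u 0) ^ 2 + (c * u 1) ^ 2 = (c * s) ^ 2 by rw [mul_pow, mul_pow, mul_pow, hs2]; ring]
        exact Real.sqrt_sq (mul_nonneg hc0 hs0)
      rw [hcs]
      have hcs' : c * s + b = s / ‖u‖ := by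
        rw [hcdef]; field_simp; ring
      rw [hcs']
      have : (s / ‖u‖) ^ 2 + (u 2 / ‖u‖) ^ 2 = 1 := by
        field_simp
        linarith [hn2]
      linarith [this.le]
    · rw [hinner]
      simp only [pt3_0, pt3_1, pt3_2]
      rw [hbdef, hsdef]
      rw [← hsdef, ← hbdef]
      have hns : ‖u‖ ≠ 0 := hn0.ne'
      have hss : s ≠ 0 := hspos.ne'
      field_simp
      linear_combination (-(s - b * ‖u‖)) * hs2 - s * hn2
    · apply hub
      intro r z hr0 hcon
      have hL2 : (s * (r + b) + z * (u 2)) ^ 2 ≤ ‖u‖ ^ 2 := by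
        nlinarith [sq_nonneg (s * z - (u 2) * (r + b)),
          mul_nonneg (by positivity : (0:ℝ) ≤ s ^ 2 + (u 2) ^ 2)
            (by linarith : (0:ℝ) ≤ 1 - ((r + b) ^ 2 + z ^ 2))]
      have hL : s * (r + b) + z * (u 2) ≤ ‖u‖ := by nlinarith [hL2, hn0]
      nlinarith [hL]
  · -- case 3
    intro ha2
    have ht0 : u 2 ≤ 0 := le_trans ha2 (by nlinarith)
    have ht2 : a ^ 2 * ‖u‖ ^ 2 ≤ (u 2) ^ 2 := by
      nlinarith [pow_le_pow_left₀ (by positivity : (0:ℝ) ≤ a * ‖u‖) (by linarith : a * ‖u‖ ≤ -(u 2)) 2]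
    have htb : a * s ≤ (-(u 2)) * b := by
      nlinarith [mul_nonneg hs0 ha.le, mul_nonneg (by linarith : (0:ℝ) ≤ -(u 2)) hb0.le,
        sq_nonneg (a * s - (-(u 2)) * b), sq_nonneg (a * s + (-(u 2)) * b)]
    refine hconc _ (pt3 0 0 (-a)) ?_ ?_ ?_
    · rw [hKa]
      simp only [Set.mem_setOf_eq, pt3_0, pt3_1, pt3_2]
      rw [show (0:ℝ) ^ 2 + 0 ^ 2 = 0 by ring, Real.sqrt_zero]
      nlinarith
    · rw [hinner]
      simp [pt3_0, pt3_1, pt3_2]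
    · apply hub
      intro r z hr0 hcon
      have hz : -a ≤ z := by
        nlinarith [mul_nonneg hr0 hb0.le, sq_nonneg r]
      have hb2' : b ^ 2 * (1 - z ^ 2) = (1 - a ^ 2) * (1 - z ^ 2) := by rw [hb2]
      have h2 : (b * (r + b)) ^ 2 ≤ (1 + a * z) ^ 2 := by
        nlinarith [sq_nonneg (a + z), hb2',
          mul_nonneg (sq_nonneg b) (by linarith : (0:ℝ) ≤ 1 - ((r + b) ^ 2 + z ^ 2))]
      have haz : -(a * z) < 1 := by nlinarith
      have hkey : b * (r + b) ≤ 1 + a * z := by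
        nlinarith [h2, mul_nonneg hb0.le (by linarith : (0:ℝ) ≤ r + b)]
      have e1 : r * b ≤ a * (a + z) := by nlinarith [hkey, hb2]
      have e2 : s * (r * b) ≤ s * (a * (a + z)) := mul_le_mul_of_nonneg_left e1 hs0
      have e3 : (a + z) * (a * s) ≤ (a + z) * ((-(u 2)) * b) :=
        mul_le_mul_of_nonneg_left htb (by linarith)
      have final : b * (r * s + z * (u 2)) ≤ b * (-(a * (u 2))) := by nlinarith [e2, e3]
      exact le_of_mul_le_mul_left final hb0
end

section
/- Let K ⊂ ℝ³ be a constant-width-1 body that is not a ball, given as K = B(S) := ⋂_{x∈S} B̄(x,1) for some set S ⊂ K. If K = (1−λ)K₀ + λK₁ with λ ∈ (0,1), K₀, K₁ of constant width 1, and there exists c⁰ ∈ ℝ³ with S − c⁰ ⊆ K₀, then K₀ = K − c⁰. -/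
open Set Metric Pointwise

section Aux

variable {n : ℕ}

lemma sSup_image_sub_const {s : Set ℝ} (hne : s.Nonempty) (hbdd : BddAbove s) (a : ℝ) :
    sSup ((fun r => r - a) '' s) = sSup s - a := by
  obtain ⟨b, hb⟩ := hbdd
  have hbdd' : BddAbove ((fun r => r - a) '' s) := by
    refine ⟨b - a, ?_⟩
    rintro r ⟨y, hy, rfl⟩
    simpa using hb hy
  apply le_antisymm
  · apply csSup_le (hne.image _)
    rintro r ⟨y, hy, rfl⟩
    have := le_csSup ⟨b, hb⟩ hy
    show y - a ≤ sSup s - a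
    linarith
  · have : sSup s ≤ sSup ((fun r => r - a) '' s) + a := by
      apply csSup_le hne
      intro y hy
      have h5 : y - a ≤ sSup ((fun r => r - a) '' s) := le_csSup hbdd' (mem_image_of_mem _ hy)
      linarith
    linarith

lemma bddAbove_inner_image {C : Set (EuclideanSpace ℝ (Fin n))} (hC : IsCompact C)
    (u : EuclideanSpace ℝ (Fin n)) :
    BddAbove ((fun x => (inner ℝ x u : ℝ)) '' C) :=
  (hC.image ((continuous_id.inner continuous_const))).bddAbove

lemma inner_le_suppFn {C : Set (EuclideanSpace ℝ (Fin n))} (hC : IsCompact C)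
    {x : EuclideanSpace ℝ (Fin n)} (hx : x ∈ C) (u : EuclideanSpace ℝ (Fin n)) :
    (inner ℝ x u : ℝ) ≤ suppFn C u :=
  le_csSup (bddAbove_inner_image hC u) ⟨x, hx, rfl⟩

lemma mem_of_forall_inner_le {C : Set (EuclideanSpace ℝ (Fin n))} (hC : IsCompact C)
    (hconv : Convex ℝ C) (hne : C.Nonempty) {x : EuclideanSpace ℝ (Fin n)}
    (h : ∀ u, (inner ℝ x u : ℝ) ≤ suppFn C u) : x ∈ C := by
  by_contra hx
  obtain ⟨f, v, hf1, hf2⟩ := geometric_hahn_banach_closed_point hconv hC.isClosed hx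
  set w := (InnerProductSpace.toDual ℝ (EuclideanSpace ℝ (Fin n))).symm f with hw
  have hfw : ∀ y, f y = (inner ℝ y w : ℝ) := fun y => by
    rw [real_inner_comm, hw, InnerProductSpace.toDual_symm_apply]
  have h1 : suppFn C w ≤ v := by
    apply csSup_le (hne.image _)
    rintro r ⟨y, hy, rfl⟩
    exact le_of_lt (by simp only []; rw [← hfw]; exact hf1 y hy)
  have := h w
  rw [← hfw x] at this
  linarith [hf2]

lemma suppFn_mono_s18 {C D : Set (EuclideanSpace ℝ (Fin n))} (hD : IsCompact D)
    (hCne : C.Nonempty) (hCD : C ⊆ D) (u : EuclideanSpace ℝ (Fin n)) :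
    suppFn C u ≤ suppFn D u :=
  csSup_le_csSup (bddAbove_inner_image hD u) (hCne.image _) (image_mono hCD)

lemma suppFn_translate {C : Set (EuclideanSpace ℝ (Fin n))} (hC : IsCompact C)
    (hne : C.Nonempty) (c u : EuclideanSpace ℝ (Fin n)) :
    suppFn ((fun x => x - c) '' C) u = suppFn C u - (inner ℝ c u : ℝ) := by
  unfold suppFn
  rw [image_image]
  have : (fun x => (inner ℝ (x - c) u : ℝ)) '' C
      = (fun r => r - (inner ℝ c u : ℝ)) '' ((fun x => (inner ℝ x u : ℝ)) '' C) := by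
    rw [image_image]
    congr 1
    funext x
    simp [inner_sub_left]
  rw [this]
  exact sSup_image_sub_const (hne.image _) (bddAbove_inner_image hC u) _

/-- A constant-width-1 body equals the intersection of unit balls centered at its points. -/
lemma cw1_eq_ball_inter {C : Set (EuclideanSpace ℝ (Fin n))} (hC : IsCW1 C) :
    C = ⋂ x ∈ C, Metric.closedBall x 1 := by
  obtain ⟨hcomp, hconv, hne, hwidth⟩ := hC
  apply Subset.antisymm
  · -- diameter ≤ 1
    intro z hz
    refine mem_iInter₂.2 fun x hx => ?_
    rw [Metric.mem_closedBall, dist_eq_norm]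
    by_cases hzx : z - x = 0
    · simp [hzx]
    · have h1 : (inner ℝ z (z - x) : ℝ) ≤ suppFn C (z - x) := inner_le_suppFn hcomp hz _
      have h2 : (inner ℝ x (-(z - x)) : ℝ) ≤ suppFn C (-(z - x)) := inner_le_suppFn hcomp hx _
      have h3 := hwidth (z - x)
      have h4 : (inner ℝ (z - x) (z - x) : ℝ) ≤ ‖z - x‖ := by
        have : (inner ℝ z (z - x) : ℝ) + (inner ℝ x (-(z - x)) : ℝ) = inner ℝ (z - x) (z - x) := by
          rw [inner_neg_right, inner_sub_left]; ring
        linarith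
      rw [real_inner_self_eq_norm_sq] at h4
      nlinarith [norm_pos_iff.2 hzx]
  · -- completeness
    intro z hz
    apply mem_of_forall_inner_le hcomp hconv hne
    intro u
    by_contra hcon
    push_neg at hcon
    by_cases hu : u = 0
    · subst hu
      rcases hne with ⟨y, hy⟩
      have : (0:ℝ) ≤ suppFn C 0 := by
        simpa using inner_le_suppFn hcomp hy (0 : EuclideanSpace ℝ (Fin n))
      simp at hcon
      linarith
    · set δ := (inner ℝ z u : ℝ) - suppFn C u with hδ
      have hδpos : 0 < δ := by rw [hδ]; linarith
      have hlt : suppFn C (-u) - δ < suppFn C (-u) := by linarith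
      obtain ⟨r, ⟨x, hx, rfl⟩, hr⟩ := exists_lt_of_lt_csSup (hne.image _) hlt
      have hr' : suppFn C (-u) - δ < (inner ℝ x (-u) : ℝ) := hr
      have hzu : (inner ℝ (z - x) u : ℝ) > ‖u‖ := by
        have h3 := hwidth u
        have : (inner ℝ (z - x) u : ℝ) = (inner ℝ z u : ℝ) - (inner ℝ x u : ℝ) := by
          rw [inner_sub_left]
        rw [inner_neg_right] at hr'
        linarith
      have hdist : ‖z - x‖ ≤ 1 := by
        have := mem_iInter₂.1 hz x hx
        rw [Metric.mem_closedBall, dist_eq_norm] at this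
        exact this
      have hcs : (inner ℝ (z - x) u : ℝ) ≤ ‖z - x‖ * ‖u‖ := real_inner_le_norm _ _
      have hupos : 0 < ‖u‖ := norm_pos_iff.2 hu
      nlinarith

end Aux

theorem stmt_18 (K K₀ K₁ S : Set (EuclideanSpace ℝ (Fin 3)))
    (hK : IsCW1 K)
    (hnotball : ¬ ∃ (c : EuclideanSpace ℝ (Fin 3)) (r : ℝ), K = Metric.closedBall c r)
    (hSK : S ⊆ K) (hKS : K = ⋂ x ∈ S, Metric.closedBall x 1)
    (lam : ℝ) (hlam : lam ∈ Set.Ioo (0:ℝ) 1)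
    (h₀ : IsCW1 K₀) (h₁ : IsCW1 K₁)
    (hdec : K = (1 - lam) • K₀ + lam • K₁)
    (c0 : EuclideanSpace ℝ (Fin 3))
    (hc0 : (fun s => s - c0) '' S ⊆ K₀) :
    K₀ = (fun x => x - c0) '' K := by
  obtain ⟨hKc, hKv, hKne, hKw⟩ := hK
  obtain ⟨h0c, h0v, h0ne, h0w⟩ := h₀
  -- Step 1: K₀ ⊆ K - c0
  have hsub : K₀ ⊆ (fun x => x - c0) '' K := by
    intro z hz
    have hz' : z ∈ ⋂ x ∈ K₀, Metric.closedBall x 1 := by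
      rw [← cw1_eq_ball_inter ⟨h0c, h0v, h0ne, h0w⟩]; exact hz
    refine ⟨z + c0, ?_, by simp⟩
    rw [hKS]
    refine mem_iInter₂.2 fun s hs => ?_
    have hsK0 : s - c0 ∈ K₀ := hc0 ⟨s, hs, rfl⟩
    have := mem_iInter₂.1 hz' (s - c0) hsK0
    rw [Metric.mem_closedBall] at this ⊢
    rw [dist_eq_norm] at this ⊢
    convert this using 2
    abel
  -- translate of K is CW1
  have hKt_comp : IsCompact ((fun x => x - c0) '' K) :=
    hKc.image (continuous_id.sub continuous_const)
  have hKt_conv : Convex ℝ ((fun x => x - c0) '' K) := by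
    have heq : (fun x : EuclideanSpace ℝ (Fin 3) => x - c0) = (fun x => -c0 + x) := by
      funext x; abel
    rw [heq]
    exact hKv.translate _
  have hKt_ne : ((fun x => x - c0) '' K).Nonempty := hKne.image _
  have hKt_supp : ∀ u, suppFn ((fun x => x - c0) '' K) u = suppFn K u - (inner ℝ c0 u : ℝ) :=
    fun u => suppFn_translate hKc hKne c0 u
  -- support functions are equal
  have hsuppeq : ∀ u, suppFn K₀ u = suppFn ((fun x => x - c0) '' K) u := by
    intro u
    have hle : suppFn K₀ u ≤ suppFn ((fun x => x - c0) '' K) u :=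
      suppFn_mono_s18 hKt_comp h0ne hsub u
    have hle' : suppFn K₀ (-u) ≤ suppFn ((fun x => x - c0) '' K) (-u) :=
      suppFn_mono_s18 hKt_comp h0ne hsub (-u)
    have hw1 := h0w u
    have hw2 : suppFn ((fun x => x - c0) '' K) u + suppFn ((fun x => x - c0) '' K) (-u) = ‖u‖ := by
      rw [hKt_supp u, hKt_supp (-u), inner_neg_right]
      have := hKw u
      linarith
    linarith
  -- conclude equality
  apply Subset.antisymm hsub
  intro x hx
  apply mem_of_forall_inner_le h0c h0v h0ne
  intro u
  rw [hsuppeq u]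
  exact inner_le_suppFn hKt_comp hx u
end
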